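/- Without the nonnegativity constraint, L̂ = aX + b + cᵀY + L with a > 0, b ∈ ℝ, c ∈ ℝ^{d-1} chosen so that E_μ[L̂] = 1, E_μ[(L̂-L)²] = δ, E_μ[L̂Y] = E_μ[LY], achieves the maximum of E_μ[L'X] over all square-integrable L' (not necessarily nonnegative) satisfying these three constraints, and the maximal value equals E_μ[LX] + sqrt(δ · det(Σ_μ(X,Y))/det(Σ_μ(Y))). -/

import Mathlib

open MeasureTheory Matrix

/-- The covariance of two real random variables under `μ`. -/
noncomputable def covar {Ω : Type*} [MeasurableSpace Ω] (μ : Measure Ω) (f g : Ω → ℝ) : ℝ :=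
  ∫ ω, (f ω - ∫ x, f x ∂μ) * (g ω - ∫ x, g x ∂μ) ∂μ

lemma memL2_mul_integrable {Ω : Type*} [MeasurableSpace Ω] {μ : Measure Ω} {f g : Ω → ℝ}
    (hf : MemLp f 2 μ) (hg : MemLp g 2 μ) :
    Integrable (fun ω => f ω * g ω) μ := by
  rw [← memLp_one_iff_integrable]
  exact (MemLp.smul hg hf :
    MemLp (f • g) 1 μ)

lemma covar_comm {Ω : Type*} [MeasurableSpace Ω] (μ : Measure Ω) (f g : Ω → ℝ) :
    covar μ f g = covar μ g f := by
  unfold covar; congr 1; ext ω; ring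

lemma covar_eq {Ω : Type*} [MeasurableSpace Ω] {μ : Measure Ω} [IsProbabilityMeasure μ]
    {f g : Ω → ℝ} (hf : MemLp f 2 μ) (hg : MemLp g 2 μ) :
    covar μ f g = (∫ ω, f ω * g ω ∂μ) - (∫ ω, f ω ∂μ) * (∫ ω, g ω ∂μ) := by
  have hfi := hf.integrable one_le_two
  have hgi := hg.integrable one_le_two
  have h1 := memL2_mul_integrable hf hg
  set A := ∫ ω, f ω ∂μ with hA
  set B := ∫ ω, g ω ∂μ with hB
  have key : ∀ ω, (f ω - A) * (g ω - B) =
      (f ω * g ω - A * g ω) - (B * f ω - A * B) := by intro ω; ring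
  calc covar μ f g = ∫ ω, ((f ω * g ω - A * g ω) - (B * f ω - A * B)) ∂μ := by
        unfold covar; rw [← hA, ← hB]; exact integral_congr_ae (Filter.Eventually.of_forall key)
    _ = (∫ ω, (f ω * g ω - A * g ω) ∂μ) - ∫ ω, (B * f ω - A * B) ∂μ := by
        apply integral_sub
        · exact h1.sub (hgi.const_mul A)
        · exact (hfi.const_mul B).sub (integrable_const _)
    _ = (∫ ω, f ω * g ω ∂μ) - A * B := by
        rw [integral_sub h1 (hgi.const_mul A), integral_sub (hfi.const_mul B) (integrable_const _),
          MeasureTheory.integral_const_mul, MeasureTheory.integral_const_mul, integral_const]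
        simp [← hA, ← hB]
        ring

/-- Without the nonnegativity constraint, `L̂ = aX + b + cᵀY + L` satisfying the
three constraints maximizes `E_μ[L'X]`, and the optimal value equals
`E_μ[LX] + √(δ · det Σ_μ(X,Y)/det Σ_μ(Y))`. -/
theorem stmt11 {Ω : Type*} [MeasurableSpace Ω] (μ : Measure Ω) [IsProbabilityMeasure μ]
    (n : ℕ) (X : Ω → ℝ) (Y : Fin n → Ω → ℝ) (L : Ω → ℝ)
    (hX : MemLp X 2 μ) (hY : ∀ i, MemLp (Y i) 2 μ)
    (hLmean : ∫ ω, L ω ∂μ = 1) (hL : MemLp L 2 μ)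
    (SXY : Matrix (Fin (n + 1)) (Fin (n + 1)) ℝ)
    (hSXY : SXY = Matrix.of fun i j =>
      covar μ ((Fin.cons X Y : Fin (n+1) → Ω → ℝ) i) ((Fin.cons X Y : Fin (n+1) → Ω → ℝ) j))
    (SY : Matrix (Fin n) (Fin n) ℝ)
    (hSY : SY = Matrix.of fun i j => covar μ (Y i) (Y j))
    (hinv : IsUnit SXY.det) (hinvY : IsUnit SY.det)
    (δ : ℝ) (hδ : 0 < δ)
    (a : ℝ) (ha : 0 < a) (b : ℝ) (c : Fin n → ℝ)
    (Lhat : Ω → ℝ)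
    (hLhat : Lhat = fun ω => a * X ω + b + (∑ i, c i * Y i ω) + L ω)
    (hLhatMean : ∫ ω, Lhat ω ∂μ = 1)
    (hLhatDiv : ∫ ω, (Lhat ω - L ω) ^ 2 ∂μ = δ)
    (hLhatMom : ∀ i, ∫ ω, Lhat ω * Y i ω ∂μ = ∫ ω, L ω * Y i ω ∂μ) :
    (∀ L' : Ω → ℝ, MemLp L' 2 μ → (∫ ω, L' ω ∂μ) = 1 →
      (∫ ω, (L' ω - L ω) ^ 2 ∂μ) ≤ δ →
      (∀ i, (∫ ω, L' ω * Y i ω ∂μ) = ∫ ω, L ω * Y i ω ∂μ) →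
      (∫ ω, L' ω * X ω ∂μ) ≤ ∫ ω, Lhat ω * X ω ∂μ) ∧
    ∫ ω, Lhat ω * X ω ∂μ =
      (∫ ω, L ω * X ω ∂μ) + Real.sqrt (δ * (SXY.det / SY.det)) := by
  have haneq : a ≠ 0 := ne_of_gt ha
  set G : Ω → ℝ := fun ω => a * X ω + b + ∑ i, c i * Y i ω with hGdef
  have hGm : MemLp G 2 μ := by
    rw [hGdef]
    exact ((hX.const_mul a).add (memLp_const b)).add
      (memLp_finset_sum _ (fun i _ => (hY i).const_mul (c i)))
  have hGi := hGm.integrable one_le_two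
  have hLi := hL.integrable one_le_two
  have hXi := hX.integrable one_le_two
  have hYi : ∀ i, Integrable (Y i) μ := fun i => (hY i).integrable one_le_two
  -- the expansion lemma
  have hsplit : ∀ h : Ω → ℝ, MemLp h 2 μ →
      ∫ ω, G ω * h ω ∂μ = a * (∫ ω, X ω * h ω ∂μ) + b * (∫ ω, h ω ∂μ)
        + ∑ i, c i * ∫ ω, Y i ω * h ω ∂μ := by
    intro h hh
    have h1 : Integrable (fun ω => a * (X ω * h ω)) μ :=
      (memL2_mul_integrable hX hh).const_mul a
    have h2 : Integrable (fun ω => b * h ω) μ := (hh.integrable one_le_two).const_mul b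
    have h3 : ∀ i, Integrable (fun ω => c i * (Y i ω * h ω)) μ := fun i =>
      (memL2_mul_integrable (hY i) hh).const_mul (c i)
    have hptw : ∀ ω, G ω * h ω =
        (a * (X ω * h ω) + b * h ω) + ∑ i, c i * (Y i ω * h ω) := by
      intro ω
      rw [hGdef]
      simp only [add_mul, Finset.sum_mul, mul_assoc]
    have h12 : Integrable (fun ω => a * (X ω * h ω) + b * h ω) μ := h1.add h2
    rw [integral_congr_ae (Filter.Eventually.of_forall hptw),
      integral_add h12 (integrable_finset_sum _ (fun i _ => h3 i)),
      integral_add h1 h2, integral_finset_sum _ (fun i _ => h3 i)]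
    simp only [MeasureTheory.integral_const_mul]
  -- basic moment facts about G
  have hG0 : ∫ ω, G ω ∂μ = 0 := by
    have h2 : ∫ ω, (G ω + L ω) ∂μ = 1 := by
      rw [← hLhatMean]; congr 1; funext ω; rw [hLhat, hGdef]
    rw [integral_add hGi hLi, hLmean] at h2; linarith
  have hGY : ∀ i, ∫ ω, G ω * Y i ω ∂μ = 0 := by
    intro i
    have h2 : ∫ ω, (G ω * Y i ω + L ω * Y i ω) ∂μ = ∫ ω, L ω * Y i ω ∂μ := by
      rw [← hLhatMom i]; congr 1; funext ω; rw [hLhat, hGdef]; ring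
    rw [integral_add (memL2_mul_integrable hGm (hY i)) (memL2_mul_integrable hL (hY i))] at h2
    linarith
  have hYG : ∀ i, ∫ ω, Y i ω * G ω ∂μ = 0 := by
    intro i; rw [← hGY i]; congr 1; funext ω; ring
  have hGG : ∫ ω, G ω * G ω ∂μ = δ := by
    rw [← hLhatDiv]; congr 1; funext ω; rw [hLhat, hGdef]; ring
  have hGX : ∫ ω, X ω * G ω ∂μ = δ / a := by
    have h := hsplit G hGm
    rw [hGG, hG0] at h
    simp only [hYG, mul_zero, Finset.sum_const_zero, add_zero] at h
    field_simp
    linarith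
  have hLhatX : ∫ ω, Lhat ω * X ω ∂μ = (∫ ω, L ω * X ω ∂μ) + δ / a := by
    have hptw : ∀ ω, Lhat ω * X ω = X ω * G ω + L ω * X ω := by
      intro ω; rw [hLhat, hGdef]; ring
    rw [integral_congr_ae (Filter.Eventually.of_forall hptw),
      integral_add (memL2_mul_integrable hX hGm) (memL2_mul_integrable hL hX), hGX]
    ring
  constructor
  · -- optimality
    intro L' hL' hL'mean hL'div hL'mom
    have hDm : MemLp (fun ω => L' ω - L ω) 2 μ := hL'.sub hL
    have hD0 : ∫ ω, (L' ω - L ω) ∂μ = 0 := by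
      rw [integral_sub (hL'.integrable one_le_two) hLi, hL'mean, hLmean]; ring
    have hDY : ∀ i, ∫ ω, Y i ω * (L' ω - L ω) ∂μ = 0 := by
      intro i
      have hptw : ∀ ω, Y i ω * (L' ω - L ω) = L' ω * Y i ω - L ω * Y i ω := fun ω => by ring
      rw [integral_congr_ae (Filter.Eventually.of_forall hptw),
        integral_sub (memL2_mul_integrable hL' (hY i)) (memL2_mul_integrable hL (hY i)),
        hL'mom i]
      ring
    have hDG : ∫ ω, G ω * (L' ω - L ω) ∂μ ≤ δ := by
      have hnn : 0 ≤ ∫ ω, ((L' ω - L ω) - G ω) ^ 2 ∂μ :=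
        integral_nonneg fun ω => sq_nonneg _
      have I1 : Integrable (fun ω => (L' ω - L ω) ^ 2) μ := hDm.integrable_sq
      have I2 : Integrable (fun ω => 2 * (G ω * (L' ω - L ω))) μ :=
        (memL2_mul_integrable hGm hDm).const_mul 2
      have I3 : Integrable (fun ω => G ω * G ω) μ := memL2_mul_integrable hGm hGm
      have hptw : ∀ ω, ((L' ω - L ω) - G ω) ^ 2 =
          ((L' ω - L ω) ^ 2 - 2 * (G ω * (L' ω - L ω))) + G ω * G ω := fun ω => by ring
      have hexp : ∫ ω, ((L' ω - L ω) - G ω) ^ 2 ∂μ =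
          ((∫ ω, (L' ω - L ω) ^ 2 ∂μ) - 2 * ∫ ω, G ω * (L' ω - L ω) ∂μ) + δ := by
        have I12 : Integrable (fun ω => (L' ω - L ω) ^ 2 - 2 * (G ω * (L' ω - L ω))) μ :=
          I1.sub I2
        rw [integral_congr_ae (Filter.Eventually.of_forall hptw),
          integral_add I12 I3, integral_sub I1 I2,
          MeasureTheory.integral_const_mul, hGG]
      rw [hexp] at hnn
      linarith
    have hXD : ∫ ω, X ω * (L' ω - L ω) ∂μ ≤ δ / a := by
      have h := hsplit (fun ω => L' ω - L ω) hDm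
      rw [hD0] at h
      simp only [hDY, mul_zero, Finset.sum_const_zero, add_zero] at h
      rw [le_div_iff₀ ha]
      have : a * ∫ ω, X ω * (L' ω - L ω) ∂μ ≤ δ := by rw [← h]; exact hDG
      linarith
    have hL'X : ∫ ω, L' ω * X ω ∂μ =
        (∫ ω, L ω * X ω ∂μ) + ∫ ω, X ω * (L' ω - L ω) ∂μ := by
      have hptw : ∀ ω, L' ω * X ω = X ω * (L' ω - L ω) + L ω * X ω := fun ω => by ring
      rw [integral_congr_ae (Filter.Eventually.of_forall hptw),
        integral_add (memL2_mul_integrable hX hDm) (memL2_mul_integrable hL hX)]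
      ring
    rw [hL'X, hLhatX]
    linarith
  · -- the value
    set s : Fin n → ℝ := fun i => covar μ X (Y i) with hs
    set V : ℝ := covar μ X X with hV
    -- mean relation
    have hGint : ∫ ω, G ω ∂μ = a * (∫ ω, X ω ∂μ) + b + ∑ j, c j * ∫ ω, Y j ω ∂μ := by
      have e1 : Integrable (fun ω => a * X ω + b) μ := (hXi.const_mul a).add (integrable_const b)
      have e3 : Integrable (fun ω => ∑ j, c j * Y j ω) μ :=
        integrable_finset_sum _ fun i _ => (hYi i).const_mul (c i)
      show ∫ ω, (a * X ω + b + ∑ i, c i * Y i ω) ∂μ = _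
      rw [integral_add e1 e3, integral_add (hXi.const_mul a) (integrable_const b),
        integral_finset_sum _ (fun i _ => (hYi i).const_mul (c i)), integral_const]
      simp [MeasureTheory.integral_const_mul]
    have hmean : a * (∫ ω, X ω ∂μ) + b + ∑ j, c j * ∫ ω, Y j ω ∂μ = 0 := by
      rw [← hGint]; exact hG0
    -- covariance relations
    have hcov : ∀ i, a * s i + ∑ j, c j * covar μ (Y j) (Y i) = 0 := by
      intro i
      have h1 := hsplit (Y i) (hY i)
      rw [hGY i] at h1
      have hsum : ∑ j, c j * covar μ (Y j) (Y i) =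
          (∑ j, c j * ∫ ω, Y j ω * Y i ω ∂μ)
            - (∑ j, c j * ∫ ω, Y j ω ∂μ) * ∫ ω, Y i ω ∂μ := by
        rw [Finset.sum_mul, ← Finset.sum_sub_distrib]
        refine Finset.sum_congr rfl fun j _ => ?_
        rw [covar_eq (hY j) (hY i)]; ring
      rw [hs]
      simp only []
      rw [covar_eq hX (hY i), hsum]
      linear_combination (-1 : ℝ) * h1 - (∫ ω, Y i ω ∂μ) * hmean
    have hdelta : δ = a ^ 2 * V + a * ∑ j, c j * s j := by
      have h1 := hsplit X hX
      have h2 : ∫ ω, G ω * X ω ∂μ = δ / a := by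
        rw [← hGX]; congr 1; funext ω; ring
      rw [h2] at h1
      have hsum : ∑ j, c j * s j =
          (∑ j, c j * ∫ ω, Y j ω * X ω ∂μ)
            - (∑ j, c j * ∫ ω, Y j ω ∂μ) * ∫ ω, X ω ∂μ := by
        rw [Finset.sum_mul, ← Finset.sum_sub_distrib]
        refine Finset.sum_congr rfl fun j _ => ?_
        rw [hs]
        simp only []
        rw [covar_comm, covar_eq (hY j) hX]; ring
      have hVX : V = (∫ ω, X ω * X ω ∂μ) - (∫ ω, X ω ∂μ) * ∫ ω, X ω ∂μ := by
        rw [hV, covar_eq hX hX]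
      rw [hVX, hsum]
      have h1' : a * (a * (∫ ω, X ω * X ω ∂μ) + b * (∫ ω, X ω ∂μ)
          + ∑ i, c i * ∫ ω, Y i ω * X ω ∂μ) = δ := by
        rw [← h1]; field_simp
      linear_combination (-1 : ℝ) * h1' + (a * ∫ ω, X ω ∂μ) * hmean
    -- matrix identities
    have hSYc : SY *ᵥ c = (-a) • s := by
      funext i
      have h1 : (SY *ᵥ c) i = ∑ j, c j * covar μ (Y j) (Y i) := by
        simp only [Matrix.mulVec, dotProduct, hSY, Matrix.of_apply]
        exact Finset.sum_congr rfl fun j _ => by rw [covar_comm μ (Y i) (Y j)]; ring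
      rw [h1]
      simp only [Pi.smul_apply, smul_eq_mul]
      have := hcov i
      linarith
    have hdot : s ⬝ᵥ (SY⁻¹ *ᵥ s) = -(1 / a) * (s ⬝ᵥ c) := by
      have h1 : SY⁻¹ *ᵥ (SY *ᵥ c) = c := by
        rw [Matrix.mulVec_mulVec, Matrix.nonsing_inv_mul _ hinvY, Matrix.one_mulVec]
      have h2 : SY⁻¹ *ᵥ s = (-(1 / a)) • c := by
        have hseq : s = (-(1 / a)) • (SY *ᵥ c) := by
          rw [hSYc]
          funext i
          simp only [Pi.smul_apply, smul_eq_mul]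
          field_simp
        rw [hseq, Matrix.mulVec_smul, h1]
      rw [h2, dotProduct_smul]
      simp
    haveI : Invertible SY := SY.invertibleOfIsUnitDet hinvY
    set e : Fin 1 ⊕ Fin n ≃ Fin (n + 1) :=
      finSumFinEquiv.trans (finCongr (Nat.add_comm 1 n)) with he
    have he0 : ∀ i : Fin 1, e (Sum.inl i) = (0 : Fin (n + 1)) := by
      intro i
      apply Fin.ext
      simp [he, finSumFinEquiv]
    have heS : ∀ j : Fin n, e (Sum.inr j) = Fin.succ j := by
      intro j
      apply Fin.ext
      simp [he, finSumFinEquiv, Nat.add_comm]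
    have hsub : SXY.submatrix e e = fromBlocks (Matrix.of fun _ _ => V)
        (Matrix.of fun _ j => s j) (Matrix.of fun i _ => s i) SY := by
      ext i j
      cases i with
      | inl i =>
        cases j with
        | inl j => simp [Matrix.submatrix_apply, he0, hSXY, hV]
        | inr j => simp [Matrix.submatrix_apply, he0, heS, hSXY, hs]
      | inr i =>
        cases j with
        | inl j =>
          simp [Matrix.submatrix_apply, he0, heS, hSXY, hs]
          rw [covar_comm]
        | inr j => simp [Matrix.submatrix_apply, heS, hSXY, hSY]
    have hdet : SXY.det = SY.det * (V - s ⬝ᵥ (SY⁻¹ *ᵥ s)) := by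
      rw [← Matrix.det_submatrix_equiv_self e SXY, hsub, Matrix.det_fromBlocks₂₂]
      congr 1
      rw [Matrix.det_fin_one]
      simp only [Matrix.sub_apply, Matrix.of_apply]
      congr 1
      rw [Matrix.invOf_eq_nonsing_inv]
      simp only [Matrix.mul_apply, dotProduct, Matrix.mulVec, Matrix.of_apply,
        Finset.sum_mul, Finset.mul_sum]
      rw [Finset.sum_comm]
      exact Finset.sum_congr rfl fun i _ => Finset.sum_congr rfl fun j _ => by ring
    have hSYne : SY.det ≠ 0 := hinvY.ne_zero
    have hfrac : SXY.det / SY.det = δ / a ^ 2 := by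
      have hcs : s ⬝ᵥ c = ∑ j, c j * s j := by
        simp [dotProduct, mul_comm]
      rw [hdet, hdot, hcs, mul_comm (SY.det), mul_div_assoc, div_self hSYne, mul_one]
      field_simp
      linear_combination (-1 : ℝ) * hdelta
    rw [hLhatX, hfrac]
    congr 1
    have hsq : δ * (δ / a ^ 2) = (δ / a) ^ 2 := by
      field_simp
    rw [hsq, Real.sqrt_sq (by positivity)]
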